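/- arXiv:1804.10803 — 2 statements merged into one kernel-verified Lean document; each statement's English description precedes it below -/
import Mathlib

section
/- Let V = ℝⁿ with the Euclidean inner product and let f : V → V be continuous. Suppose there exists M > 0 such that for all u ∈ V with |u| > M one has ⟪u, f(u)⟫ > 0. If x : ℝ → V is a 2π-periodic C² function satisfying ẍ(t) = (1−τ)·x(t) + τ·λ²·f(x(t)) for all t, for some τ ∈ [0,1] and λ > 0, then max_{t} |x(t)| ≤ M. -/
open Real
open scoped RealInnerProductSpace

theorem stmt0 {n : ℕ} (f : EuclideanSpace ℝ (Fin n) → EuclideanSpace ℝ (Fin n))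
    (hf : Continuous f) (M : ℝ) (hM : 0 < M)
    (hNagumo : ∀ u : EuclideanSpace ℝ (Fin n), M < ‖u‖ → 0 < ⟪u, f u⟫)
    (x : ℝ → EuclideanSpace ℝ (Fin n)) (hx : ContDiff ℝ 2 x)
    (hper : Function.Periodic x (2 * π))
    (τ lam : ℝ) (hτ : τ ∈ Set.Icc (0:ℝ) 1) (hlam : 0 < lam)
    (hode : ∀ t, deriv (deriv x) t = (1 - τ) • x t + (τ * lam ^ 2) • f (x t)) :
    ∀ t, ‖x t‖ ≤ M := by
  have hx1 : Differentiable ℝ x := hx.differentiable two_ne_zero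
  have hxd : ContDiff ℝ 1 (deriv x) := by
    have h2 : ContDiff ℝ ((1 : ℕ) + 1) x := by exact_mod_cast hx
    exact (contDiff_succ_iff_deriv.mp h2).2.2
  have hx1' : Differentiable ℝ (deriv x) := hxd.differentiable one_ne_zero
  set g : ℝ → ℝ := fun s => ⟪x s, deriv x s⟫ with hg
  set r : ℝ → ℝ := fun s => ⟪x s, x s⟫ with hrdef
  have hDx : ∀ s, HasDerivAt x (deriv x s) s := fun s => (hx1 s).hasDerivAt
  have hDx' : ∀ s, HasDerivAt (deriv x) (deriv (deriv x) s) s := fun s => (hx1' s).hasDerivAt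
  have hDr : ∀ s, HasDerivAt r (2 * g s) s := by
    intro s
    have h := HasDerivAt.inner (𝕜 := ℝ) (hDx s) (hDx s)
    refine h.congr_deriv ?_
    simp only [hg, real_inner_comm (x s) (deriv x s)]
    ring
  have hDg : ∀ s, HasDerivAt g
      (‖deriv x s‖ ^ 2 + ((1 - τ) * ‖x s‖ ^ 2 + (τ * lam ^ 2) * ⟪x s, f (x s)⟫)) s := by
    intro s
    have h := HasDerivAt.inner (𝕜 := ℝ) (hDx s) (hDx' s)
    rw [hode s] at h
    refine h.congr_deriv ?_
    rw [inner_add_right, real_inner_smul_right, real_inner_smul_right,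
      real_inner_self_eq_norm_sq, real_inner_self_eq_norm_sq]
    ring
  have hrcont : Continuous r := (hx.continuous.inner hx.continuous)
  have hrper : Function.Periodic r (2 * π) := fun s => by simp [hrdef, hper s]
  have h2pi : (0 : ℝ) < 2 * π := by positivity
  -- maximum on the compact interval
  obtain ⟨t₀, ht₀mem, ht₀⟩ := isCompact_Icc.exists_isMaxOn (Set.nonempty_Icc.mpr h2pi.le)
    hrcont.continuousOn (s := Set.Icc (0:ℝ) (2 * π))
  have hglobal : ∀ s, r s ≤ r t₀ := by
    intro s
    obtain ⟨y, hy, hys⟩ := hrper.exists_mem_Ico₀ h2pi s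
    rw [hys]
    exact ht₀ (Set.mem_Icc.mpr ⟨hy.1, hy.2.le⟩)
  -- it suffices to bound ‖x t₀‖
  have key : ‖x t₀‖ ≤ M := by
    by_contra hlt
    push_neg at hlt
    -- r has a global max at t₀, so r' t₀ = 0, i.e. g t₀ = 0
    have hmax : IsLocalMax r t₀ := Filter.Eventually.of_forall hglobal
    have hg0 : g t₀ = 0 := by
      have := hmax.hasDerivAt_eq_zero (hDr t₀)
      linarith
    -- g' t₀ > 0
    set c : ℝ := ‖deriv x t₀‖ ^ 2 + ((1 - τ) * ‖x t₀‖ ^ 2 + (τ * lam ^ 2) * ⟪x t₀, f (x t₀)⟫)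
      with hc
    have hcpos : 0 < c := by
      have hin : 0 < ⟪x t₀, f (x t₀)⟫ := hNagumo _ hlt
      have hxpos : 0 < ‖x t₀‖ := hM.trans hlt
      have hxn : 0 < ‖x t₀‖ ^ 2 := pow_pos hxpos 2
      have hnn : 0 ≤ ‖deriv x t₀‖ ^ 2 := sq_nonneg _
      rw [hc]
      rcases lt_or_eq_of_le hτ.2 with hτ1 | hτ1
      · nlinarith [mul_pos (sub_pos.mpr hτ1) hxn,
          mul_nonneg (mul_nonneg hτ.1 (sq_nonneg lam)) hin.le]
      · rw [hτ1]
        nlinarith [mul_pos (pow_pos hlam 2) hin]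
    -- hence g > 0 just to the right of t₀
    have hslope : Filter.Tendsto (slope g t₀) (nhdsWithin t₀ {t₀}ᶜ) (nhds c) :=
      hasDerivAt_iff_tendsto_slope.mp (hDg t₀)
    have hev : ∀ᶠ s in nhdsWithin t₀ (Set.Ioi t₀), 0 < g s := by
      have h1 : ∀ᶠ s in nhdsWithin t₀ {t₀}ᶜ, 0 < slope g t₀ s :=
        hslope.eventually (eventually_gt_nhds hcpos)
      have h2 : ∀ᶠ s in nhdsWithin t₀ (Set.Ioi t₀), 0 < slope g t₀ s :=
        nhdsWithin_mono t₀ (fun s hs => ne_of_gt hs) h1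
      filter_upwards [h2, self_mem_nhdsWithin] with s hs hs'
      have hst : 0 < s - t₀ := sub_pos.mpr hs'
      have hsl : slope g t₀ s = g s / (s - t₀) := by
        rw [slope_def_field, hg0, sub_zero]
      rw [hsl] at hs
      have := mul_pos hs hst
      rw [div_mul_cancel₀ _ (ne_of_gt hst)] at this
      exact this
    obtain ⟨δ, hδpos, hδ⟩ := (nhdsGT_basis t₀).eventually_iff.mp hev
    set u : ℝ := (t₀ + δ) / 2 with hu
    have hu1 : t₀ < u := by rw [hu]; linarith
    have hu2 : u < δ := by rw [hu]; linarith
    have hmono : StrictMonoOn r (Set.Icc t₀ u) := by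
      apply strictMonoOn_of_deriv_pos (convex_Icc _ _) hrcont.continuousOn
      intro s hs
      rw [interior_Icc] at hs
      rw [(hDr s).deriv]
      have : 0 < g s := hδ ⟨hs.1, hs.2.trans hu2⟩
      linarith
    have hlt' : r t₀ < r u :=
      hmono (Set.left_mem_Icc.mpr hu1.le) (Set.right_mem_Icc.mpr hu1.le) hu1
    exact absurd (hglobal u) (not_le.mpr hlt')
  intro t
  have h1 : r t ≤ r t₀ := hglobal t
  have h2 : r t = ‖x t‖ ^ 2 := real_inner_self_eq_norm_sq _
  have h3 : r t₀ = ‖x t₀‖ ^ 2 := real_inner_self_eq_norm_sq _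
  nlinarith [norm_nonneg (x t), norm_nonneg (x t₀)]
end

section
/- Let G be a finite group and A(G) its Burnside ring. For elements a, b ∈ A(G) write Φ(a) for the set of conjugacy classes with nonzero coefficient in a. Suppose: (i) a is invertible in A(G); (ii) (H) is maximal in (Φ(a) ∪ Φ(b)) \ {(G)}; (iii) (H) ∈ Φ(b) and (H) ∉ Φ(a). Then (H) ∈ Φ(a·b), i.e., the coefficient of (H) in a·b is nonzero. -/
private lemma burnside_expand {ι : Type*} [DecidableEq ι] {A : Type*} [CommRing A]
    (coeff : A ≃+ (ι →₀ ℤ)) (x y : A) (L : ι) :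
    coeff (x * y) L =
      ∑ i ∈ (coeff x).support, ∑ j ∈ (coeff y).support,
        coeff x i * coeff y j *
          coeff (coeff.symm (Finsupp.single i 1) * coeff.symm (Finsupp.single j 1)) L := by
  have hx : ∀ z : A, z = ∑ i ∈ (coeff z).support,
      coeff z i • coeff.symm (Finsupp.single i 1) := by
    intro z
    apply coeff.injective
    rw [map_sum]
    simp only [map_zsmul, AddEquiv.apply_symm_apply, Finsupp.smul_single, smul_eq_mul, mul_one]
    exact (Finsupp.sum_single (coeff z)).symm
  conv_lhs => rw [hx x, hx y]
  rw [Finset.sum_mul_sum, map_sum]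
  rw [Finsupp.finset_sum_apply]
  refine Finset.sum_congr rfl fun i _ => ?_
  rw [map_sum, Finsupp.finset_sum_apply]
  refine Finset.sum_congr rfl fun j _ => ?_
  rw [smul_mul_assoc, mul_smul_comm, map_zsmul, map_zsmul]
  simp [mul_assoc, mul_comm, mul_left_comm]

/-- Abstract model of the Burnside ring `A(G)` with the subconjugacy partial
order on the set `ι` of conjugacy classes of subgroups, `g₀ = (G)` the top
class, `1 = (G)`, and the structural fact that any class appearing in the
product `(H)·(K)` is subconjugate to both `H` and `K`.
Lemma: if `a` is invertible, `(H)` is maximal in `(Φ(a) ∪ Φ(b)) \ {(G)}`,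
`(H) ∈ Φ(b)` and `(H) ∉ Φ(a)`, then `(H) ∈ Φ(a·b)`. -/
theorem stmt9 {ι : Type*} [PartialOrder ι] [DecidableEq ι] {A : Type*} [CommRing A]
    (coeff : A ≃+ (ι →₀ ℤ)) (g₀ : ι) (htop : ∀ i : ι, i ≤ g₀)
    (h1 : coeff 1 = Finsupp.single g₀ 1)
    (hprod : ∀ H K L : ι,
      coeff (coeff.symm (Finsupp.single H 1) * coeff.symm (Finsupp.single K 1)) L ≠ 0 →
      L ≤ H ∧ L ≤ K)
    (a b : A) (H : ι)
    (ha : IsUnit a)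
    (hmax : ∀ K : ι, K ∈ (coeff a).support ∪ (coeff b).support → K ≠ g₀ → H ≤ K → K = H)
    (hHb : H ∈ (coeff b).support) (hHa : H ∉ (coeff a).support) (hH : H ≠ g₀) :
    H ∈ (coeff (a * b)).support := by
  classical
  have heg : coeff.symm (Finsupp.single g₀ 1) = 1 := by
    rw [← h1, AddEquiv.symm_apply_apply]
  -- Step A : coeff a g₀ ≠ 0
  obtain ⟨u, rfl⟩ := ha
  set a : A := (u : A) with ha'
  have hac : a * (↑u⁻¹ : A) = 1 := by
    rw [ha']; exact_mod_cast u.mul_inv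
  have hA : coeff a g₀ * coeff (↑u⁻¹ : A) g₀ = 1 := by
    have hexp := burnside_expand coeff a (↑u⁻¹ : A) g₀
    rw [hac, h1, Finsupp.single_eq_same] at hexp
    symm
    rw [hexp]
    rw [Finset.sum_eq_single g₀]
    · rw [Finset.sum_eq_single g₀]
      · rw [heg, one_mul, h1, Finsupp.single_eq_same, mul_one]
      · intro j hj hjne
        rcases eq_or_ne (coeff (coeff.symm (Finsupp.single g₀ 1) *
            coeff.symm (Finsupp.single j 1)) g₀) 0 with h | h
        · rw [h, mul_zero]
        · exact absurd (le_antisymm (hprod g₀ j g₀ h).2 (htop j)) (Ne.symm hjne)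
      · intro h
        rw [Finsupp.notMem_support_iff.mp h, mul_zero, zero_mul]
    · intro i hi hine
      apply Finset.sum_eq_zero
      intro j _
      rcases eq_or_ne (coeff (coeff.symm (Finsupp.single i 1) *
          coeff.symm (Finsupp.single j 1)) g₀) 0 with h | h
      · rw [h, mul_zero]
      · exact absurd (le_antisymm (hprod i j g₀ h).1 (htop i)) (Ne.symm hine)
    · intro h
      apply Finset.sum_eq_zero
      intro j _
      rw [Finsupp.notMem_support_iff.mp h, zero_mul, zero_mul]
  have hag : coeff a g₀ ≠ 0 := left_ne_zero_of_mul_eq_one hA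
  -- Step B : coeff (a*b) H = coeff a g₀ * coeff b H
  have hB : coeff (a * b) H = coeff a g₀ * coeff b H := by
    rw [burnside_expand coeff a b H]
    rw [Finset.sum_eq_single g₀]
    · rw [Finset.sum_eq_single H]
      · rw [heg, one_mul, AddEquiv.apply_symm_apply, Finsupp.single_eq_same, mul_one]
      · intro j hj hjne
        rw [heg, one_mul, AddEquiv.apply_symm_apply, Finsupp.single_eq_of_ne' hjne, mul_zero]
      · intro h; exact absurd hHb h
    · intro i hi hine
      apply Finset.sum_eq_zero
      intro j _
      rcases eq_or_ne (coeff (coeff.symm (Finsupp.single i 1) *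
          coeff.symm (Finsupp.single j 1)) H) 0 with h | h
      · rw [h, mul_zero]
      · have : i = H := hmax i (Finset.mem_union_left _ hi) hine (hprod i j H h).1
        exact absurd (this ▸ hi) hHa
    · intro h
      apply Finset.sum_eq_zero
      intro j _
      rw [Finsupp.notMem_support_iff.mp h, zero_mul, zero_mul]
  rw [Finsupp.mem_support_iff, hB]
  exact mul_ne_zero hag (Finsupp.mem_support_iff.mp hHb)
end
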